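/- Let a = (a_1, …, a_k) be a nonempty finite sequence of positive integers and let ξ = (ξ_i)_{i≥1} have the GEM(a) distribution. Then, with b := a_1 + ⋯ + a_k, for each i = 1, …, k the random variable ξ_i has the Beta(a_i, 1 + b − a_i) distribution. -/

import Mathlib

open MeasureTheory ProbabilityTheory
open scoped ENNReal NNReal

open Set in
private lemma realBetaIntegral {p q : ℝ} (hp : 0 < p) (hq : 0 < q) :
    ∫ x in Set.Ioo (0:ℝ) 1, x ^ (p-1) * (1-x) ^ (q-1) =
      Real.Gamma p * Real.Gamma q / Real.Gamma (p+q) := by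
  have h := Complex.Gamma_mul_Gamma_eq_betaIntegral (s := (p:ℂ)) (t := (q:ℂ))
    (by simpa using hp) (by simpa using hq)
  have h2 : Complex.betaIntegral p q
      = ((∫ x in (0:ℝ)..1, x ^ (p-1) * (1-x) ^ (q-1) : ℝ) : ℂ) := by
    rw [Complex.betaIntegral, ← intervalIntegral.integral_ofReal]
    apply intervalIntegral.integral_congr
    intro x hx
    rw [Set.uIcc_of_le (by norm_num : (0:ℝ) ≤ 1)] at hx
    simp only []
    rw [Complex.ofReal_mul, Complex.ofReal_cpow hx.1,
      Complex.ofReal_cpow (by linarith [hx.2] : (0:ℝ) ≤ 1 - x)]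
    push_cast
    ring
  rw [h2, Complex.Gamma_ofReal, Complex.Gamma_ofReal, ← Complex.ofReal_add,
    Complex.Gamma_ofReal, ← Complex.ofReal_mul, ← Complex.ofReal_mul] at h
  have h3 := Complex.ofReal_injective h
  have hG : Real.Gamma (p+q) ≠ 0 := (Real.Gamma_pos_of_pos (by linarith)).ne'
  have h4 : ∫ x in (0:ℝ)..1, x ^ (p-1) * (1-x) ^ (q-1)
      = Real.Gamma p * Real.Gamma q / Real.Gamma (p+q) := by
    field_simp
    linarith [h3]
  rw [← h4, intervalIntegral.integral_of_le (by norm_num : (0:ℝ) ≤ 1),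
    MeasureTheory.integral_Ioc_eq_integral_Ioo]

/-- The uniform distribution on the unit interval `(0,1)`. -/
noncomputable def unifMeasure : Measure ℝ := volume.restrict (Set.Ioo 0 1)

/-- The Beta distribution with parameters `a`, `b`: the measure on `(0,1)` with density
`t^(a-1) * (1-t)^(b-1) * Γ(a+b)/(Γ(a)Γ(b))`. -/
noncomputable def betaMeasure (a b : ℝ) : Measure ℝ :=
  unifMeasure.withDensity fun t =>
    ENNReal.ofReal (t ^ (a - 1) * (1 - t) ^ (b - 1) *
      (Real.Gamma (a + b) / (Real.Gamma a * Real.Gamma b)))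

instance : IsProbabilityMeasure unifMeasure := by
  constructor
  rw [unifMeasure, Measure.restrict_apply MeasurableSet.univ]
  simp [Real.volume_Ioo]

private noncomputable def betaDens (a b : ℝ) (t : ℝ) : ℝ :=
  t ^ (a - 1) * (1 - t) ^ (b - 1) * (Real.Gamma (a + b) / (Real.Gamma a * Real.Gamma b))

private lemma betaDens_meas (a b : ℝ) : Measurable (betaDens a b) := by
  unfold betaDens
  fun_prop

private lemma betaDens_nonneg {a b : ℝ} {t : ℝ} (ha : 0 < a) (hb : 0 < b)
    (ht : t ∈ Set.Ioo (0:ℝ) 1) : 0 ≤ betaDens a b t := by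
  have h1 : (0:ℝ) < Real.Gamma (a+b) := Real.Gamma_pos_of_pos (by linarith)
  have h2 : (0:ℝ) < Real.Gamma a := Real.Gamma_pos_of_pos ha
  have h3 : (0:ℝ) < Real.Gamma b := Real.Gamma_pos_of_pos hb
  have := Real.rpow_nonneg ht.1.le (a-1)
  have := Real.rpow_nonneg (by linarith [ht.2] : (0:ℝ) ≤ 1 - t) (b-1)
  unfold betaDens
  positivity

private lemma betaDens_le {a b : ℝ} (ha : 1 ≤ a) (hb : 1 ≤ b) {t : ℝ}
    (ht : t ∈ Set.Ioo (0:ℝ) 1) :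
    |betaDens a b t| ≤ Real.Gamma (a + b) / (Real.Gamma a * Real.Gamma b) := by
  have h1 : (0:ℝ) < Real.Gamma (a+b) := Real.Gamma_pos_of_pos (by linarith)
  have h2 : (0:ℝ) < Real.Gamma a := Real.Gamma_pos_of_pos (by linarith)
  have h3 : (0:ℝ) < Real.Gamma b := Real.Gamma_pos_of_pos (by linarith)
  rw [abs_of_nonneg (betaDens_nonneg (by linarith) (by linarith) ht)]
  unfold betaDens
  have e1 : t ^ (a-1) ≤ 1 := Real.rpow_le_one ht.1.le ht.2.le (by linarith)
  have e2 : (1-t) ^ (b-1) ≤ 1 :=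
    Real.rpow_le_one (by linarith [ht.2]) (by linarith [ht.1]) (by linarith)
  have e3 := Real.rpow_nonneg ht.1.le (a-1)
  have e4 := Real.rpow_nonneg (by linarith [ht.2] : (0:ℝ) ≤ 1 - t) (b-1)
  have e5 : t ^ (a-1) * (1-t) ^ (b-1) ≤ 1 := mul_le_one₀ e1 e4 e2
  exact mul_le_of_le_one_left (div_pos h1 (mul_pos h2 h3)).le e5

private lemma betaDens_integrable {a b : ℝ} (ha : 1 ≤ a) (hb : 1 ≤ b) :
    Integrable (betaDens a b) unifMeasure := by
  refine Integrable.mono' (integrable_const (Real.Gamma (a + b) / (Real.Gamma a * Real.Gamma b)))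
    (betaDens_meas a b).aestronglyMeasurable ?_
  rw [unifMeasure, ae_restrict_iff' measurableSet_Ioo]
  exact Filter.Eventually.of_forall fun t ht => betaDens_le ha hb ht

private lemma betaDens_integral {a b : ℝ} (ha : 1 ≤ a) (hb : 1 ≤ b) :
    ∫ t, betaDens a b t ∂unifMeasure = 1 := by
  have h0a : (0:ℝ) < a := by linarith
  have h0b : (0:ℝ) < b := by linarith
  have h1 : (0:ℝ) < Real.Gamma (a+b) := Real.Gamma_pos_of_pos (by linarith)
  have h2 : (0:ℝ) < Real.Gamma a := Real.Gamma_pos_of_pos h0a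
  have h3 : (0:ℝ) < Real.Gamma b := Real.Gamma_pos_of_pos h0b
  unfold unifMeasure betaDens
  rw [integral_mul_const, realBetaIntegral h0a h0b]
  field_simp

private lemma betaMeasure_eq (a b : ℝ) :
    _root_.betaMeasure a b = unifMeasure.withDensity fun t => ((betaDens a b t).toNNReal : ℝ≥0∞) := rfl

private lemma betaMeasure_prob {a b : ℝ} (ha : 1 ≤ a) (hb : 1 ≤ b) :
    IsProbabilityMeasure (_root_.betaMeasure a b) := by
  constructor
  rw [betaMeasure_eq, withDensity_apply _ MeasurableSet.univ, Measure.restrict_univ]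
  have hae : ∀ᵐ t ∂unifMeasure, 0 ≤ betaDens a b t := by
    rw [unifMeasure, ae_restrict_iff' measurableSet_Ioo]
    exact Filter.Eventually.of_forall fun t ht =>
      betaDens_nonneg (by linarith) (by linarith) ht
  rw [show (fun t => ((betaDens a b t).toNNReal : ℝ≥0∞)) =
      fun t => ENNReal.ofReal (betaDens a b t) from rfl,
    ← ofReal_integral_eq_lintegral_ofReal (betaDens_integrable ha hb) hae,
    betaDens_integral ha hb]
  simp

private lemma unifMeasure_ae : ∀ᵐ x ∂unifMeasure, x ∈ Set.Ioo (0:ℝ) 1 := by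
  rw [unifMeasure, ae_restrict_iff' measurableSet_Ioo]
  exact Filter.Eventually.of_forall fun t ht => ht

private lemma betaMeasure_ae (a b : ℝ) : ∀ᵐ x ∂_root_.betaMeasure a b, x ∈ Set.Ioo (0:ℝ) 1 := by
  rw [ae_iff]
  have hset : {x : ℝ | ¬ x ∈ Set.Ioo (0:ℝ) 1} = (Set.Ioo (0:ℝ) 1)ᶜ := rfl
  rw [hset, betaMeasure_eq, withDensity_apply _ measurableSet_Ioo.compl]
  have hz : unifMeasure.restrict (Set.Ioo (0:ℝ) 1)ᶜ = 0 := by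
    rw [unifMeasure, Measure.restrict_restrict measurableSet_Ioo.compl]
    simp [Set.compl_inter_self]
  rw [hz]
  simp

private lemma betaMeasure_integral {a b : ℝ} (ha : 1 ≤ a) (hb : 1 ≤ b) (g : ℝ → ℝ) :
    ∫ x, g x ∂_root_.betaMeasure a b = ∫ t in Set.Ioo (0:ℝ) 1, betaDens a b t * g t := by
  rw [betaMeasure_eq,
    integral_withDensity_eq_integral_smul (betaDens_meas a b).real_toNNReal g, unifMeasure]
  refine setIntegral_congr_fun measurableSet_Ioo fun t ht => ?_
  simp only [NNReal.smul_def, smul_eq_mul]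
  rw [Real.coe_toNNReal _ (betaDens_nonneg (by linarith) (by linarith) ht)]

private lemma betaMoment {a b : ℝ} (ha : 1 ≤ a) (hb : 1 ≤ b) (n : ℕ) :
    ∫ x, x ^ n ∂_root_.betaMeasure a b =
      Real.Gamma (a + n) * Real.Gamma (a + b) / (Real.Gamma a * Real.Gamma (a + b + n)) := by
  have h1 : (0:ℝ) < Real.Gamma (a+b) := Real.Gamma_pos_of_pos (by linarith)
  have h2 : (0:ℝ) < Real.Gamma a := Real.Gamma_pos_of_pos (by linarith)
  have h3 : (0:ℝ) < Real.Gamma b := Real.Gamma_pos_of_pos (by linarith)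
  have h4 : (0:ℝ) < Real.Gamma (a+b+n) := Real.Gamma_pos_of_pos (by positivity)
  rw [betaMeasure_integral ha hb]
  have key : ∫ t in Set.Ioo (0:ℝ) 1, betaDens a b t * t ^ n
      = ∫ t in Set.Ioo (0:ℝ) 1, (t ^ (a + n - 1) * (1-t) ^ (b-1)) *
          (Real.Gamma (a + b) / (Real.Gamma a * Real.Gamma b)) := by
    refine setIntegral_congr_fun measurableSet_Ioo fun t ht => ?_
    unfold betaDens
    rw [← Real.rpow_natCast t n, show a + (n:ℝ) - 1 = (a - 1) + n by ring,
      Real.rpow_add ht.1 (a-1) n]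
    ring
  rw [key, integral_mul_const, realBetaIntegral (by positivity : (0:ℝ) < a + n) (by linarith)]
  rw [show a + (n:ℝ) + b = a + b + n by ring]
  field_simp

private lemma betaMomentCompl {a b : ℝ} (ha : 1 ≤ a) (hb : 1 ≤ b) (n : ℕ) :
    ∫ x, (1 - x) ^ n ∂_root_.betaMeasure a b =
      Real.Gamma (b + n) * Real.Gamma (a + b) / (Real.Gamma b * Real.Gamma (a + b + n)) := by
  have h1 : (0:ℝ) < Real.Gamma (a+b) := Real.Gamma_pos_of_pos (by linarith)
  have h2 : (0:ℝ) < Real.Gamma a := Real.Gamma_pos_of_pos (by linarith)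
  have h3 : (0:ℝ) < Real.Gamma b := Real.Gamma_pos_of_pos (by linarith)
  have h4 : (0:ℝ) < Real.Gamma (a+b+n) := Real.Gamma_pos_of_pos (by positivity)
  rw [betaMeasure_integral ha hb]
  have key : ∫ t in Set.Ioo (0:ℝ) 1, betaDens a b t * (1-t) ^ n
      = ∫ t in Set.Ioo (0:ℝ) 1, (t ^ (a - 1) * (1-t) ^ (b + n - 1)) *
          (Real.Gamma (a + b) / (Real.Gamma a * Real.Gamma b)) := by
    refine setIntegral_congr_fun measurableSet_Ioo fun t ht => ?_
    unfold betaDens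
    rw [← Real.rpow_natCast (1-t) n, show b + (n:ℝ) - 1 = (b - 1) + n by ring,
      Real.rpow_add (by linarith [ht.2] : (0:ℝ) < 1 - t) (b-1) n]
    ring
  rw [key, integral_mul_const, realBetaIntegral (by linarith : (0:ℝ) < a)
    (by positivity : (0:ℝ) < b + n)]
  rw [show a + ((b:ℝ) + n) = a + b + n by ring]
  field_simp

private lemma integrable_of_ae_Icc {μ : Measure ℝ} [IsProbabilityMeasure μ]
    (hμ : ∀ᵐ x ∂μ, x ∈ Set.Icc (0:ℝ) 1) {f : ℝ → ℝ} (hf : Continuous f) :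
    Integrable f μ := by
  obtain ⟨C, hC⟩ := (isCompact_Icc (a := (0:ℝ)) (b := 1)).exists_bound_of_continuousOn
    hf.continuousOn
  refine Integrable.mono' (integrable_const C) hf.aestronglyMeasurable ?_
  filter_upwards [hμ] with x hx
  exact hC x hx

private lemma ext_of_moments (μ ν : Measure ℝ) [IsProbabilityMeasure μ] [IsProbabilityMeasure ν]
    (hμ : ∀ᵐ x ∂μ, x ∈ Set.Icc (0:ℝ) 1) (hν : ∀ᵐ x ∂ν, x ∈ Set.Icc (0:ℝ) 1)
    (h : ∀ n : ℕ, ∫ x, x ^ n ∂μ = ∫ x, x ^ n ∂ν) : μ = ν := by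
  have hpoly : ∀ p : Polynomial ℝ, ∫ x, p.eval x ∂μ = ∫ x, p.eval x ∂ν := by
    intro p
    induction p using Polynomial.induction_on' with
    | add p q hp hq =>
      have ip : ∀ (κ : Measure ℝ), (∀ᵐ x ∂κ, x ∈ Set.Icc (0:ℝ) 1) → IsProbabilityMeasure κ →
          ∀ r : Polynomial ℝ, Integrable (fun x => r.eval x) κ := by
        intro κ hκ _ r
        exact integrable_of_ae_Icc hκ r.continuous
      simp only [Polynomial.eval_add]
      rw [integral_add (ip μ hμ inferInstance p) (ip μ hμ inferInstance q),
        integral_add (ip ν hν inferInstance p) (ip ν hν inferInstance q), hp, hq]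
    | monomial n c =>
      simp only [Polynomial.eval_monomial]
      rw [integral_const_mul, integral_const_mul, h n]
  have hcont : ∀ f : ℝ → ℝ, Continuous f → ∫ x, f x ∂μ = ∫ x, f x ∂ν := by
    intro f hf
    refine eq_of_forall_dist_le fun ε hε => ?_
    obtain ⟨p, hp⟩ := exists_polynomial_near_of_continuousOn 0 1 f hf.continuousOn (ε/3)
      (by linarith)
    have hint : ∀ (κ : Measure ℝ), (∀ᵐ x ∂κ, x ∈ Set.Icc (0:ℝ) 1) →
        IsProbabilityMeasure κ → dist (∫ x, f x ∂κ) (∫ x, p.eval x ∂κ) ≤ ε/3 := by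
      intro κ hκ hκ'
      rw [dist_eq_norm, ← integral_sub (integrable_of_ae_Icc hκ hf)
        (integrable_of_ae_Icc hκ p.continuous)]
      calc ‖∫ x, (f x - p.eval x) ∂κ‖ ≤ ∫ _x, ε/3 ∂κ := by
            refine norm_integral_le_of_norm_le (integrable_const _) ?_
            filter_upwards [hκ] with x hx
            rw [Real.norm_eq_abs, abs_sub_comm]
            exact (hp x hx).le
        _ = ε/3 := by simp
    calc dist (∫ x, f x ∂μ) (∫ x, f x ∂ν)
        ≤ dist (∫ x, f x ∂μ) (∫ x, p.eval x ∂μ) + dist (∫ x, p.eval x ∂μ) (∫ x, f x ∂ν) :=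
          dist_triangle _ _ _
      _ ≤ dist (∫ x, f x ∂μ) (∫ x, p.eval x ∂μ) +
          (dist (∫ x, p.eval x ∂μ) (∫ x, p.eval x ∂ν) + dist (∫ x, p.eval x ∂ν) (∫ x, f x ∂ν)) :=
          by gcongr; exact dist_triangle _ _ _
      _ ≤ ε/3 + (0 + ε/3) := by
          gcongr
          · exact hint μ hμ inferInstance
          · rw [hpoly p]; simp
          · rw [dist_comm]; exact hint ν hν inferInstance
      _ ≤ ε := by linarith
  refine ext_of_forall_lintegral_eq_of_IsFiniteMeasure fun f => ?_
  have hfc : Continuous fun x => ((f x : NNReal) : ℝ) := NNReal.continuous_coe.comp f.continuous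
  have key := hcont _ hfc
  rw [lintegral_coe_eq_integral (fun x => f x) (integrable_of_ae_Icc hμ hfc),
    lintegral_coe_eq_integral (fun x => f x) (integrable_of_ae_Icc hν hfc)]
  exact congrArg _ key

private lemma integral_prod_range {Ω : Type*} [MeasurableSpace Ω] (μ : Measure Ω)
    [IsProbabilityMeasure μ] (F : ℕ → Ω → ℝ) (hm : ∀ j, Measurable (F j))
    (h : iIndepFun F μ) (m : ℕ) :
    ∫ ω, ∏ j ∈ Finset.range m, F j ω ∂μ = ∏ j ∈ Finset.range m, ∫ ω, F j ω ∂μ := by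
  induction m with
  | zero => simp
  | succ m ih =>
      have hfn : (∏ j ∈ Finset.range m, F j) = fun ω => ∏ j ∈ Finset.range m, F j ω :=
        funext fun ω => by simp
      have hXY := IndepFun.integral_mul_eq_mul_integral (h.indepFun_prod_range_succ hm m)
        (by rw [hfn]
            exact (Finset.measurable_prod _ fun j _ => hm j).aestronglyMeasurable)
        (hm m).aestronglyMeasurable
      simp only [Finset.prod_range_succ]
      rw [← ih]
      have e1 : (fun ω => (∏ j ∈ Finset.range m, F j ω) * F m ω)
          = (∏ j ∈ Finset.range m, F j) * F m := by
        rw [hfn]; rfl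
      have e2 : (fun ω => ∏ j ∈ Finset.range m, F j ω) = ∏ j ∈ Finset.range m, F j := hfn.symm
      rw [show (∫ ω, (∏ j ∈ Finset.range m, F j ω) * F m ω ∂μ)
          = ∫ ω, ((∏ j ∈ Finset.range m, F j) * F m) ω ∂μ from by rw [← e1],
        show (∫ ω, ∏ j ∈ Finset.range m, F j ω ∂μ) = ∫ ω, (∏ j ∈ Finset.range m, F j) ω ∂μ
          from by rw [← e2]]
      exact hXY

private lemma telescope (g : ℕ → ℝ) (hg : ∀ j, g j ≠ 0) (i : ℕ) :
    ∏ j ∈ Finset.range i, (g j / g (j+1)) = g 0 / g i := by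
  induction i with
  | zero => simpa using (div_self (hg 0)).symm
  | succ i ih =>
      rw [Finset.prod_range_succ, ih, div_mul_div_comm, mul_comm (g 0) (g i),
        mul_div_mul_left _ _ (hg i)]

theorem gem_marginals_beta
    {Ω : Type*} [MeasurableSpace Ω] (μ : Measure Ω) [IsProbabilityMeasure μ]
    (k : ℕ) (hk : 0 < k) (a : ℕ → ℕ) (ha : ∀ i < k, 0 < a i)
    (ζ : ℕ → Ω → ℝ) (hζmeas : ∀ i, Measurable (ζ i))
    (hζindep : iIndepFun ζ μ)
    (hζlaw : ∀ i < k, Measure.map (ζ i) μ =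
      _root_.betaMeasure (a i) (1 + ∑ j ∈ Finset.Ico (i + 1) k, (a j : ℝ)))
    (hζlaw' : ∀ i, k ≤ i → Measure.map (ζ i) μ = unifMeasure)
    (ξ : ℕ → Ω → ℝ)
    (hξ : ∀ i ω, ξ i ω = ζ i ω * ∏ j ∈ Finset.range i, (1 - ζ j ω)) :
    ∀ i < k, Measure.map (ξ i) μ =
      _root_.betaMeasure (a i) (1 + (∑ j ∈ Finset.range k, (a j : ℝ)) - a i) := by
  intro i hi
  -- notation
  set b : ℝ := ∑ j ∈ Finset.range k, (a j : ℝ) with hb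
  set c : ℕ → ℝ := fun j => 1 + ∑ l ∈ Finset.Ico j k, (a l : ℝ) with hc
  have hc1 : ∀ j, 1 ≤ c j := fun j => le_add_of_nonneg_right
    (Finset.sum_nonneg fun l _ => by positivity)
  have hc2 : ∀ j < k, (a j : ℝ) + c (j+1) = c j := by
    intro j hj
    simp only [hc]
    rw [Finset.sum_eq_sum_Ico_succ_bot hj]
    ring
  have hc0 : c 0 = 1 + b := by simp only [hc, hb, Finset.range_eq_Ico]
  have hai1 : (1:ℝ) ≤ (a i : ℝ) := by exact_mod_cast ha i hi
  have haib : (a i : ℝ) ≤ b := by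
    rw [hb]
    exact Finset.single_le_sum (f := fun j => (a j : ℝ)) (fun j _ => by positivity)
      (Finset.mem_range.mpr hi)
  have htarget1 : (1:ℝ) ≤ 1 + b - a i := by linarith
  -- measurability of ξ i
  have hξmeas : Measurable (ξ i) := by
    have : ξ i = fun ω => ζ i ω * ∏ j ∈ Finset.range i, (1 - ζ j ω) := funext (hξ i)
    rw [this]
    exact (hζmeas i).mul (Finset.measurable_prod _ fun j _ => (measurable_const.sub (hζmeas j)))
  -- a.e. membership of ζ j in (0,1) for j < k
  have hζae : ∀ j < k, ∀ᵐ ω ∂μ, ζ j ω ∈ Set.Ioo (0:ℝ) 1 := by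
    intro j hj
    have := betaMeasure_ae (a j) (c (j+1))
    rw [← hζlaw j hj] at this
    exact (ae_map_iff (hζmeas j).aemeasurable measurableSet_Ioo).mp this
  -- a.e. membership of ξ i in (0,1)
  have hξae : ∀ᵐ ω ∂μ, ξ i ω ∈ Set.Ioo (0:ℝ) 1 := by
    have hall : ∀ᵐ ω ∂μ, ∀ j, j ≤ i → ζ j ω ∈ Set.Ioo (0:ℝ) 1 := by
      rw [MeasureTheory.ae_all_iff]
      intro j
      by_cases hj : j ≤ i
      · filter_upwards [hζae j (lt_of_le_of_lt hj hi)] with ω hω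
        exact fun _ => hω
      · exact Filter.Eventually.of_forall fun ω h => absurd h hj
    filter_upwards [hall] with ω hω
    rw [hξ i ω]
    have hζi := hω i le_rfl
    have hP0 : (0:ℝ) < ∏ j ∈ Finset.range i, (1 - ζ j ω) :=
      Finset.prod_pos fun j hj => by
        have := hω j (le_of_lt (Finset.mem_range.mp hj))
        linarith [this.2]
    have hP1 : ∏ j ∈ Finset.range i, (1 - ζ j ω) ≤ 1 :=
      Finset.prod_le_one (fun j hj => by
          have := hω j (le_of_lt (Finset.mem_range.mp hj)); linarith [this.2])
        (fun j hj => by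
          have := hω j (le_of_lt (Finset.mem_range.mp hj)); linarith [this.1])
    constructor
    · exact mul_pos hζi.1 hP0
    · calc ζ i ω * ∏ j ∈ Finset.range i, (1 - ζ j ω) ≤ ζ i ω :=
            mul_le_of_le_one_right hζi.1.le hP1
        _ < 1 := hζi.2
  have hmapprob : IsProbabilityMeasure (Measure.map (ξ i) μ) :=
    Measure.isProbabilityMeasure_map hξmeas.aemeasurable
  have hbetaprob : IsProbabilityMeasure (_root_.betaMeasure (a i) (1 + b - a i)) :=
    betaMeasure_prob hai1 htarget1
  -- apply uniqueness by moments
  refine ext_of_moments _ _ ?_ ?_ ?_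
  · refine (ae_map_iff hξmeas.aemeasurable measurableSet_Icc).mpr ?_
    filter_upwards [hξae] with ω hω
    exact ⟨hω.1.le, hω.2.le⟩
  · filter_upwards [betaMeasure_ae _ _] with x hx
    exact ⟨hx.1.le, hx.2.le⟩
  · intro n
    -- the factor functions
    set φ : ℕ → ℝ → ℝ := fun j => if j = i then (fun t => t ^ n) else (fun t => (1 - t) ^ n)
      with hφ
    have hφmeas : ∀ j, Measurable (φ j) := by
      intro j
      by_cases hj : j = i <;> simp only [hφ, hj, if_pos, if_neg, if_true, if_false] <;> fun_prop
    set F : ℕ → Ω → ℝ := fun j ω => φ j (ζ j ω) with hF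
    have hFmeas : ∀ j, Measurable (F j) := fun j => (hφmeas j).comp (hζmeas j)
    have hFindep : iIndepFun F μ :=
      hζindep.comp φ hφmeas
    -- LHS as integral over Ω
    rw [integral_map hξmeas.aemeasurable (by fun_prop : Measurable fun x : ℝ => x ^ n).aestronglyMeasurable]
    have hpt : ∀ ω, ξ i ω ^ n = ∏ j ∈ Finset.range (i+1), F j ω := by
      intro ω
      rw [hξ i ω, mul_pow, ← Finset.prod_pow, Finset.prod_range_succ]
      have h1 : F i ω = ζ i ω ^ n := by simp [hF, hφ]
      have h2 : ∀ j ∈ Finset.range i, (1 - ζ j ω) ^ n = F j ω := by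
        intro j hj
        have hne : j ≠ i := Nat.ne_of_lt (Finset.mem_range.mp hj)
        simp [hF, hφ, hne]
      rw [h1, Finset.prod_congr rfl h2]
      ring
    simp_rw [hpt]
    rw [integral_prod_range μ F hFmeas hFindep (i+1)]
    -- compute each factor
    have hfactor : ∀ j, j ≤ i → (∫ ω, F j ω ∂μ) =
        if j = i then
          Real.Gamma (a i + n) * Real.Gamma (c i) / (Real.Gamma (a i) * Real.Gamma (c i + n))
        else
          Real.Gamma (c (j+1) + n) * Real.Gamma (c j) /
            (Real.Gamma (c (j+1)) * Real.Gamma (c j + n)) := by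
      intro j hj
      have hjk : j < k := lt_of_le_of_lt hj hi
      have h1j : (1:ℝ) ≤ (a j : ℝ) := by exact_mod_cast ha j hjk
      have hint : (∫ ω, F j ω ∂μ) = ∫ x, φ j x ∂(Measure.map (ζ j) μ) :=
        (integral_map (hζmeas j).aemeasurable (hφmeas j).aestronglyMeasurable).symm
      rw [hint, hζlaw j hjk]
      by_cases hji : j = i
      · subst hji
        rw [if_pos rfl]
        have hφj : φ j = fun t => t ^ n := by simp [hφ]
        simp only [hφj]
        rw [betaMoment h1j (hc1 (j+1)), hc2 j hjk]
      · rw [if_neg hji]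
        have hφj : φ j = fun t => (1 - t) ^ n := by simp [hφ, hji]
        simp only [hφj]
        rw [betaMomentCompl h1j (hc1 (j+1)), hc2 j hjk]
    -- RHS moment
    rw [betaMoment hai1 htarget1 n]
    have hG : ∀ j, Real.Gamma (c j) / Real.Gamma (c j + n) ≠ 0 := by
      intro j
      have p1 : (0:ℝ) < Real.Gamma (c j) := Real.Gamma_pos_of_pos (by linarith [hc1 j])
      have p2 : (0:ℝ) < Real.Gamma (c j + n) := Real.Gamma_pos_of_pos (by
        have := hc1 j; positivity)
      positivity
    rw [Finset.prod_range_succ]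
    rw [hfactor i le_rfl, if_pos rfl]
    have hprod : ∏ j ∈ Finset.range i, (∫ ω, F j ω ∂μ)
        = (Real.Gamma (c 0) / Real.Gamma (c 0 + n)) /
          (Real.Gamma (c i) / Real.Gamma (c i + n)) := by
      rw [← telescope (fun j => Real.Gamma (c j) / Real.Gamma (c j + n)) hG i]
      refine Finset.prod_congr rfl fun j hj => ?_
      have hji : j < i := Finset.mem_range.mp hj
      rw [hfactor j hji.le, if_neg (Nat.ne_of_lt hji)]
      have p1 : (0:ℝ) < Real.Gamma (c j) := Real.Gamma_pos_of_pos (by linarith [hc1 j])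
      have p2 : (0:ℝ) < Real.Gamma (c j + n) := Real.Gamma_pos_of_pos (by
        have := hc1 j; positivity)
      have p3 : (0:ℝ) < Real.Gamma (c (j+1)) := Real.Gamma_pos_of_pos (by linarith [hc1 (j+1)])
      have p4 : (0:ℝ) < Real.Gamma (c (j+1) + n) := Real.Gamma_pos_of_pos (by
        have := hc1 (j+1); positivity)
      field_simp
    rw [hprod]
    have e1 : (a i : ℝ) + (1 + b - a i) = c 0 := by rw [hc0]; ring
    rw [e1]
    have p1 : (0:ℝ) < Real.Gamma (c 0) := Real.Gamma_pos_of_pos (by linarith [hc1 0])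
    have p2 : (0:ℝ) < Real.Gamma (c 0 + n) := Real.Gamma_pos_of_pos (by
      have := hc1 0; positivity)
    have p3 : (0:ℝ) < Real.Gamma (c i) := Real.Gamma_pos_of_pos (by linarith [hc1 i])
    have p4 : (0:ℝ) < Real.Gamma (c i + n) := Real.Gamma_pos_of_pos (by
      have := hc1 i; positivity)
    have p5 : (0:ℝ) < Real.Gamma (a i) := Real.Gamma_pos_of_pos (by linarith)
    have p6 : (0:ℝ) < Real.Gamma (a i + n) := Real.Gamma_pos_of_pos (by positivity)
    field_simp
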